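/- Let $\alpha > 1$ be a real number. For every $\delta > 0$ there exists $N_0$ such that for every $n \ge N_0$, every $C_5$-colorable graph $G$ on $n$ vertices satisfies $\lambda_{\alpha,C_5}(G) \le \frac{|\mathrm{Aut}(C_5)| \cdot |T_{5,n}^{5}|}{n^{5/\alpha}} + \delta n^{4 - 5/\alpha}$, where $|\mathrm{Aut}(C_5)| = 10$. -/

import Mathlib

set_option maxRecDepth 4000
set_option maxHeartbeats 1000000


open scoped Classical
open Finset Filter Real

/-- An `r`-uniform hypergraph on vertex set `Fin n`. -/
structure RGraph (r n : ℕ) where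
  edges : Finset (Finset (Fin n))
  card_eq : ∀ e ∈ edges, e.card = r

/-- The set (as a `Finset`) of injective homomorphisms from `Q` to `H`. -/
noncomputable def Inj {r a b : ℕ} (Q : RGraph r a) (H : RGraph r b) :
    Finset (Fin a → Fin b) :=
  Finset.univ.filter fun φ => Function.Injective φ ∧ ∀ e ∈ Q.edges, e.image φ ∈ H.edges

/-- The Lagrangian `Q`-polynomial of `H`. -/
noncomputable def lagPoly {r a n : ℕ} (Q : RGraph r a) (H : RGraph r n)
    (x : Fin n → ℝ) : ℝ :=
  ∑ φ ∈ Inj Q H, ∏ i ∈ Finset.univ.image φ, x i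

/-- The domain `Δ_α^{n-1} = {x : |x_1|^α + ⋯ + |x_n|^α = 1}`. -/
def simplex (α : ℝ) (n : ℕ) : Set (Fin n → ℝ) :=
  {x | ∑ i, |x i| ^ α = 1}

/-- The `(α,Q)`-spectral radius of `H`. -/
noncomputable def specRad (α : ℝ) {r a n : ℕ} (Q : RGraph r a) (H : RGraph r n) : ℝ :=
  sSup (lagPoly Q H '' simplex α n)

/-- The set of optimal vectors. -/
noncomputable def OPT (α : ℝ) {r a n : ℕ} (Q : RGraph r a) (H : RGraph r n) :
    Set (Fin n → ℝ) :=
  {x ∈ simplex α n | lagPoly Q H x = specRad α Q H}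
/-- The 5-cycle `C₅` as a 2-graph on 5 vertices. -/
def C5 : RGraph 2 5 where
  edges := {{0, 1}, {1, 2}, {2, 3}, {3, 4}, {4, 0}}
  card_eq := by decide

/-- The triangle `K₃` as a 2-graph on 3 vertices. -/
def K3 : RGraph 2 3 where
  edges := {{0, 1}, {1, 2}, {0, 2}}
  card_eq := by decide

/-- A graph is `C₅`-colorable if it admits a homomorphism to `C₅`. -/
def C5Colorable {n : ℕ} (G : RGraph 2 n) : Prop :=
  ∃ φ : Fin n → Fin 5, ∀ e ∈ G.edges, e.image φ ∈ C5.edges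
/-- The balanced complete `m`-partite `q`-graph on `n` vertices: parts are the residue
classes mod `m`, edges are the `q`-subsets meeting each part in at most one vertex. -/
def TuranHG (m q n : ℕ) : RGraph q n where
  edges := (Finset.powersetCard q Finset.univ).filter
    (fun e => ∀ v ∈ e, ∀ w ∈ e, v.val % m = w.val % m → v = w)
  card_eq := fun e he => (Finset.mem_powersetCard.mp (Finset.mem_filter.mp he).1).2

/-- The classical Lagrangian polynomial `P_H(x) = q! ∑_{e ∈ H} ∏_{i ∈ e} x_i`. -/
noncomputable def lagPolyEdge {q n : ℕ} (H : RGraph q n) (x : Fin n → ℝ) : ℝ :=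
  (q.factorial : ℝ) * ∑ e ∈ H.edges, ∏ i ∈ e, x i

/-- The `α`-spectral radius `λ_α(H)` of a `q`-graph `H`. -/
noncomputable def specRadEdge (α : ℝ) {q n : ℕ} (H : RGraph q n) : ℝ :=
  sSup (lagPolyEdge H '' simplex α n)

lemma mem_Inj {r a b : ℕ} {Q : RGraph r a} {H : RGraph r b} {φ : Fin a → Fin b} :
    φ ∈ Inj Q H ↔ Function.Injective φ ∧ ∀ e ∈ Q.edges, e.image φ ∈ H.edges := by
  simp [Inj]

-- ### combinatorial auxiliary lemmas

def autT : Finset (Fin 5 × Fin 5 × Fin 5 × Fin 5 × Fin 5) :=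
  {(0,1,2,3,4),(1,2,3,4,0),(2,3,4,0,1),(3,4,0,1,2),(4,0,1,2,3),
   (0,4,3,2,1),(1,0,4,3,2),(2,1,0,4,3),(3,2,1,0,4),(4,3,2,1,0)}

lemma autT_card : autT.card = 10 := by decide

lemma tuple_mem (a0 a1 a2 a3 a4 : Fin 5)
    (h0 : ({a0,a1} : Finset (Fin 5)) ∈ C5.edges)
    (h1 : ({a1,a2} : Finset (Fin 5)) ∈ C5.edges)
    (h2 : ({a2,a3} : Finset (Fin 5)) ∈ C5.edges)
    (h3 : ({a3,a4} : Finset (Fin 5)) ∈ C5.edges)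
    (h4 : ({a4,a0} : Finset (Fin 5)) ∈ C5.edges) :
    (a0,a1,a2,a3,a4) ∈ autT := by revert a0 a1 a2 a3 a4; decide

lemma hom_tuple_mem (ρ : Fin 5 → Fin 5) (h : ∀ e ∈ C5.edges, e.image ρ ∈ C5.edges) :
    (ρ 0, ρ 1, ρ 2, ρ 3, ρ 4) ∈ autT := by
  have h0 := h {0,1} (by decide)
  have h1 := h {1,2} (by decide)
  have h2 := h {2,3} (by decide)
  have h3 := h {3,4} (by decide)
  have h4 := h {4,0} (by decide)
  simp only [Finset.image_insert, Finset.image_singleton] at h0 h1 h2 h3 h4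
  exact tuple_mem _ _ _ _ _ h0 h1 h2 h3 h4

lemma tuple_distinct (a0 a1 a2 a3 a4 : Fin 5)
    (h0 : ({a0,a1} : Finset (Fin 5)) ∈ C5.edges)
    (h1 : ({a1,a2} : Finset (Fin 5)) ∈ C5.edges)
    (h2 : ({a2,a3} : Finset (Fin 5)) ∈ C5.edges)
    (h3 : ({a3,a4} : Finset (Fin 5)) ∈ C5.edges)
    (h4 : ({a4,a0} : Finset (Fin 5)) ∈ C5.edges) :
    a0 ≠ a1 ∧ a0 ≠ a2 ∧ a0 ≠ a3 ∧ a0 ≠ a4 ∧ a1 ≠ a2 ∧ a1 ≠ a3 ∧ a1 ≠ a4 ∧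
    a2 ≠ a3 ∧ a2 ≠ a4 ∧ a3 ≠ a4 := by revert a0 a1 a2 a3 a4; decide

lemma hom_inj (ρ : Fin 5 → Fin 5) (h : ∀ e ∈ C5.edges, e.image ρ ∈ C5.edges) :
    Function.Injective ρ := by
  have h0 := h {0,1} (by decide)
  have h1 := h {1,2} (by decide)
  have h2 := h {2,3} (by decide)
  have h3 := h {3,4} (by decide)
  have h4 := h {4,0} (by decide)
  simp only [Finset.image_insert, Finset.image_singleton] at h0 h1 h2 h3 h4
  obtain ⟨d1,d2,d3,d4,d5,d6,d7,d8,d9,d10⟩ := tuple_distinct _ _ _ _ _ h0 h1 h2 h3 h4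
  intro i j hij
  fin_cases i <;> fin_cases j <;> simp_all

lemma hom_mem_InjC5C5 (ρ : Fin 5 → Fin 5) (h : ∀ e ∈ C5.edges, e.image ρ ∈ C5.edges) :
    ρ ∈ Inj C5 C5 := mem_Inj.mpr ⟨hom_inj ρ h, h⟩

lemma InjC5C5_card_le : (Inj C5 C5).card ≤ 10 := by
  have h : (Inj C5 C5).card ≤ autT.card := by
    apply Finset.card_le_card_of_injOn (fun ρ => (ρ 0, ρ 1, ρ 2, ρ 3, ρ 4))
    · intro ρ hρ
      exact hom_tuple_mem ρ (mem_Inj.mp hρ).2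
    · intro ρ _ ρ' _ hval
      simp only [Prod.mk.injEq] at hval
      obtain ⟨e0, e1, e2, e3, e4⟩ := hval
      funext i
      fin_cases i <;> assumption
  simpa [autT_card] using h

lemma amgm5 (b : Fin 5 → ℝ) (hb : ∀ j, 0 ≤ b j) :
    ∏ j, b j ≤ ((∑ j, b j) / 5) ^ (5:ℕ) := by
  have hw : ∀ j ∈ (univ : Finset (Fin 5)), (0:ℝ) ≤ (5:ℝ)⁻¹ := by intros; norm_num
  have hw' : ∑ _j : Fin 5, (5:ℝ)⁻¹ = 1 := by norm_num
  have h := Real.geom_mean_le_arith_mean_weighted univ (fun _ => (5:ℝ)⁻¹) b hw hw'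
    (fun j _ => hb j)
  have h1 : ∀ j : Fin 5, (b j ^ (5:ℝ)⁻¹) ^ (5:ℕ) = b j := by
    intro j
    rw [← Real.rpow_natCast (b j ^ (5:ℝ)⁻¹) 5, ← Real.rpow_mul (hb j)]
    norm_num
  calc ∏ j, b j = ∏ j, (b j ^ (5:ℝ)⁻¹) ^ (5:ℕ) := by simp [h1]
    _ = (∏ j, b j ^ (5:ℝ)⁻¹) ^ (5:ℕ) := by rw [Finset.prod_pow]
    _ ≤ (∑ j, (5:ℝ)⁻¹ * b j) ^ (5:ℕ) := by
        apply pow_le_pow_left₀ (Finset.prod_nonneg fun j _ => Real.rpow_nonneg (hb j) _) h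
    _ = ((∑ j, b j) / 5) ^ (5:ℕ) := by rw [← Finset.mul_sum]; ring_nf

lemma holder_step {α : ℝ} (hα : 1 < α) {n : ℕ} (s : Finset (Fin n)) (y : Fin n → ℝ)
    (hy : ∀ i, 0 ≤ y i) :
    (∑ i ∈ s, y i) ^ α ≤ (s.card : ℝ) ^ (α - 1) * ∑ i ∈ s, y i ^ α := by
  rcases Finset.eq_empty_or_nonempty s with rfl | hs
  · simp [Real.zero_rpow (by positivity : α ≠ 0)]
  · have hm : (0:ℝ) < (s.card : ℝ) := by exact_mod_cast hs.card_pos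
    have h := Real.rpow_arith_mean_le_arith_mean_rpow s (fun _ => ((s.card : ℝ))⁻¹) y
      (fun i _ => by positivity) (by simp [mul_inv_cancel₀ hm.ne']) (fun i _ => hy i)
      (le_of_lt hα)
    rw [← Finset.mul_sum, ← Finset.mul_sum] at h
    have h2 : (((s.card:ℝ))⁻¹ * ∑ i ∈ s, y i) ^ α
        = ((s.card:ℝ))⁻¹ ^ α * (∑ i ∈ s, y i) ^ α := by
      apply Real.mul_rpow (by positivity) (Finset.sum_nonneg fun i _ => hy i)
    rw [h2] at h
    have h3 : (∑ i ∈ s, y i) ^ α ≤ (s.card:ℝ) ^ α * (((s.card:ℝ))⁻¹ * ∑ i ∈ s, y i ^ α) := by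
      have hpos : (0:ℝ) < ((s.card:ℝ))⁻¹ ^ α := Real.rpow_pos_of_pos (by positivity) _
      have hc : ((s.card:ℝ)) ^ α * ((s.card:ℝ))⁻¹ ^ α = 1 := by
        rw [← Real.mul_rpow hm.le (by positivity), mul_inv_cancel₀ hm.ne',
          Real.one_rpow]
      calc (∑ i ∈ s, y i) ^ α
          = (s.card:ℝ) ^ α * (((s.card:ℝ))⁻¹ ^ α * (∑ i ∈ s, y i) ^ α) := by
            rw [← mul_assoc, hc, one_mul]
        _ ≤ (s.card:ℝ) ^ α * (((s.card:ℝ))⁻¹ * ∑ i ∈ s, y i ^ α) := by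
            apply mul_le_mul_of_nonneg_left h (Real.rpow_nonneg hm.le _)
    calc (∑ i ∈ s, y i) ^ α ≤ (s.card:ℝ) ^ α * (((s.card:ℝ))⁻¹ * ∑ i ∈ s, y i ^ α) := h3
      _ = (s.card : ℝ) ^ (α - 1) * ∑ i ∈ s, y i ^ α := by
          rw [Real.rpow_sub hm, Real.rpow_one]
          ring

lemma prod_classes_le {α : ℝ} (hα : 1 < α) {n : ℕ} (hn : 0 < n) (c : Fin n → Fin 5)
    (y : Fin n → ℝ) (hy : ∀ i, 0 ≤ y i) (hsum : ∑ i, y i ^ α = 1) :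
    ∏ j : Fin 5, (∑ i ∈ Finset.univ.filter (fun i => c i = j), y i)
      ≤ (n:ℝ) ^ ((5:ℝ) - 5/α) / 3125 := by
  classical
  set V : Fin 5 → Finset (Fin n) := fun j => Finset.univ.filter (fun i => c i = j) with hV
  set a : Fin 5 → ℝ := fun j => ∑ i ∈ V j, y i with ha
  set s : Fin 5 → ℝ := fun j => ∑ i ∈ V j, y i ^ α with hs
  set m : Fin 5 → ℝ := fun j => ((V j).card : ℝ) with hm
  have hα0 : (0:ℝ) < α := lt_trans one_pos hα
  have ha0 : ∀ j, 0 ≤ a j := fun j => Finset.sum_nonneg fun i _ => hy i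
  have hs0 : ∀ j, 0 ≤ s j := fun j => Finset.sum_nonneg fun i _ => Real.rpow_nonneg (hy i) _
  have hm0 : ∀ j, 0 ≤ m j := fun j => by positivity
  have hssum : ∑ j, s j = 1 := by
    rw [hs]
    rw [Finset.sum_fiberwise_of_maps_to (fun i _ => Finset.mem_univ (c i))
      (fun i => y i ^ α)]
    exact hsum
  have hmsum : ∑ j, m j = (n:ℝ) := by
    have h := Finset.card_eq_sum_card_fiberwise (fun i (_ : i ∈ Finset.univ) =>
      Finset.mem_univ (c i))
    have : ∑ j, m j = ((Finset.univ : Finset (Fin n)).card : ℝ) := by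
      rw [h]; push_cast; rfl
    simpa using this
  have hA : ∀ j, a j ^ α ≤ m j ^ (α - 1) * s j := fun j => holder_step hα (V j) y hy
  have hNpos : (0:ℝ) < (n:ℝ) := by exact_mod_cast hn
  have h5pos : (0:ℝ) < 5 := by norm_num
  have hPA : (∏ j, a j) ^ α = ∏ j, (a j ^ α) :=
    (Real.finset_prod_rpow Finset.univ a (fun j _ => ha0 j) α).symm
  have h1 : ∏ j, (a j ^ α) ≤ ∏ j, (m j ^ (α-1) * s j) :=
    Finset.prod_le_prod (fun j _ => Real.rpow_nonneg (ha0 j) α) (fun j _ => hA j)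
  have h2 : ∏ j, (m j ^ (α-1) * s j) = (∏ j, m j) ^ (α-1) * ∏ j, s j := by
    rw [Finset.prod_mul_distrib, Real.finset_prod_rpow Finset.univ m (fun j _ => hm0 j)]
  have h3 : ∏ j, m j ≤ (((n:ℝ))/5) ^ (5:ℕ) := by
    have := amgm5 m hm0; rwa [hmsum] at this
  have h4 : ∏ j, s j ≤ ((1:ℝ)/5) ^ (5:ℕ) := by
    have := amgm5 s hs0; rwa [hssum] at this
  have h5 : (∏ j, m j) ^ (α-1) ≤ ((((n:ℝ))/5) ^ (5:ℕ)) ^ (α-1) :=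
    Real.rpow_le_rpow (Finset.prod_nonneg fun j _ => hm0 j) h3 (by linarith)
  have hB : ((((n:ℝ))/5) ^ (5:ℕ)) ^ (α-1) * ((1:ℝ)/5) ^ (5:ℕ)
      = ((n:ℝ) ^ ((5:ℝ)-5/α) / 3125) ^ α := by
    have h3125 : (3125:ℝ) = (5:ℝ) ^ (5:ℝ) := by
      rw [show (5:ℝ) = ((5:ℕ):ℝ) from by norm_num, Real.rpow_natCast]; norm_num
    have l1 : ((((n:ℝ))/5) ^ (5:ℕ)) ^ (α-1) = (n:ℝ) ^ (5*(α-1)) / (5:ℝ) ^ (5*(α-1)) := by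
      rw [← Real.rpow_natCast ((n:ℝ)/5) 5, ← Real.rpow_mul (by positivity),
        Real.div_rpow hNpos.le (by norm_num)]
      norm_num
    have l2 : ((n:ℝ) ^ ((5:ℝ)-5/α) / 3125) ^ α = (n:ℝ) ^ (5*α-5) / (3125:ℝ) ^ α := by
      rw [Real.div_rpow (Real.rpow_nonneg hNpos.le _) (by norm_num),
        ← Real.rpow_mul hNpos.le]
      congr 2
      field_simp
    have l3 : (3125:ℝ) ^ α = (5:ℝ) ^ (5*(α-1)) * 3125 := by
      calc (3125:ℝ) ^ α = ((5:ℝ) ^ (5:ℝ)) ^ α := by rw [h3125]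
        _ = (5:ℝ) ^ ((5:ℝ)*α) := (Real.rpow_mul h5pos.le _ _).symm
        _ = (5:ℝ) ^ (5*(α-1) + 5) := by ring_nf
        _ = (5:ℝ) ^ (5*(α-1)) * (5:ℝ) ^ (5:ℝ) := by rw [Real.rpow_add h5pos]
        _ = (5:ℝ) ^ (5*(α-1)) * 3125 := by rw [← h3125]
    rw [l1, l2, l3]
    have hden : (5:ℝ) ^ (5*(α-1)) ≠ 0 := by
      exact ne_of_gt (Real.rpow_pos_of_pos h5pos _)
    have hexp : 5*(α-1) = 5*α-5 := by ring
    rw [hexp]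
    rw [show ((1:ℝ)/5)^(5:ℕ) = 1/3125 from by norm_num, div_mul_div_comm, mul_one]
  have hfinal : (∏ j, a j) ^ α ≤ ((n:ℝ) ^ ((5:ℝ)-5/α) / 3125) ^ α := by
    rw [hPA]
    calc ∏ j, (a j ^ α) ≤ ∏ j, (m j ^ (α-1) * s j) := h1
      _ = (∏ j, m j) ^ (α-1) * ∏ j, s j := h2
      _ ≤ ((((n:ℝ))/5) ^ (5:ℕ)) ^ (α-1) * ((1:ℝ)/5) ^ (5:ℕ) := by
          apply mul_le_mul h5 h4 (Finset.prod_nonneg fun j _ => hs0 j)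
            (Real.rpow_nonneg (by positivity) _)
      _ = ((n:ℝ) ^ ((5:ℝ)-5/α) / 3125) ^ α := hB
  exact (Real.rpow_le_rpow_iff (Finset.prod_nonneg fun j _ => ha0 j)
    (by positivity) hα0).mp hfinal

lemma range_residue_card (c : ℕ) (hc : c < 5) (n : ℕ) :
    ((Finset.range n).filter (fun i => i % 5 = c)).card = (n + 4 - c)/5 := by
  induction n with
  | zero => simp; omega
  | succ n ih =>
    rw [Finset.range_add_one, Finset.filter_insert]
    by_cases h : n % 5 = c
    · rw [if_pos h, Finset.card_insert_of_notMem (fun hmem => by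
        simpa using (Finset.mem_filter.mp hmem).1), ih]
      omega
    · rw [if_neg h, ih]
      omega

lemma fin_residue_card (n : ℕ) (c : ℕ) (hc : c < 5) :
    (Finset.univ.filter (fun i : Fin n => (i:ℕ) % 5 = c)).card = (n + 4 - c)/5 := by
  rw [← range_residue_card c hc n]
  apply Finset.card_bij (fun (i : Fin n) _ => (i : ℕ))
  · intro i hi
    simp only [Finset.mem_filter, Finset.mem_univ, true_and] at hi
    simp only [Finset.mem_filter, Finset.mem_range]
    exact ⟨i.isLt, hi⟩
  · intro i _ j _ h
    exact Fin.ext h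
  · intro j hj
    simp only [Finset.mem_filter, Finset.mem_range] at hj
    exact ⟨⟨j, hj.1⟩, by simp [hj.2], rfl⟩

lemma turan_prod_le (n : ℕ) :
    ∏ c : Fin 5, (Finset.univ.filter (fun i : Fin n => (i:ℕ) % 5 = (c:ℕ))).card
      ≤ (TuranHG 5 5 n).edges.card := by
  classical
  have hcomp : ∀ ψ : (∀ c : Fin 5, {i : Fin n // (i:ℕ) % 5 = (c:ℕ)}),
      Function.Injective (fun c : Fin 5 => (ψ c).1) := by
    intro ψ c c' h
    apply Fin.ext
    have h1 := (ψ c).2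
    have h2 := (ψ c').2
    simp only at h
    rw [← h1, ← h2, h]
  have hmem : ∀ ψ : (∀ c : Fin 5, {i : Fin n // (i:ℕ) % 5 = (c:ℕ)}),
      Finset.image (fun c => (ψ c).1) Finset.univ ∈ (TuranHG 5 5 n).edges := by
    intro ψ
    refine Finset.mem_filter.mpr ⟨Finset.mem_powersetCard.mpr ⟨Finset.subset_univ _, ?_⟩, ?_⟩
    · rw [Finset.card_image_of_injective _ (hcomp ψ), Finset.card_univ, Fintype.card_fin]
    · intro v hv w hw hmod
      obtain ⟨cv, _, hcv⟩ := Finset.mem_image.mp hv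
      obtain ⟨cw, _, hcw⟩ := Finset.mem_image.mp hw
      have hcvw : cv = cw := by
        apply Fin.ext
        rw [← (ψ cv).2, ← (ψ cw).2, hcv, hcw]
        exact hmod
      rw [← hcv, ← hcw, hcvw]
  set F : (∀ c : Fin 5, {i : Fin n // (i:ℕ) % 5 = (c:ℕ)}) →
      {e // e ∈ (TuranHG 5 5 n).edges} :=
    fun ψ => ⟨Finset.image (fun c => (ψ c).1) Finset.univ, hmem ψ⟩ with hF
  have Finj : Function.Injective F := by
    intro ψ ψ' h
    have him : Finset.image (fun c => (ψ c).1) Finset.univ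
        = Finset.image (fun c => (ψ' c).1) Finset.univ := congrArg Subtype.val h
    funext c
    apply Subtype.ext
    have hmm : (ψ c).1 ∈ Finset.image (fun c => (ψ' c).1) Finset.univ := by
      rw [← him]
      exact Finset.mem_image_of_mem _ (Finset.mem_univ c)
    obtain ⟨c', _, hc'⟩ := Finset.mem_image.mp hmm
    have hcc : c' = c := by
      apply Fin.ext
      rw [← (ψ' c').2]
      rw [hc', (ψ c).2]
    rw [← hc', hcc]
  have hcard := Fintype.card_le_of_injective F Finj
  rw [Fintype.card_pi] at hcard
  simp only [Fintype.card_subtype, Fintype.card_coe] at hcard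
  simpa using hcard

lemma turan_lower (n : ℕ) :
    (n:ℝ)^(5:ℕ) ≤ 3125 * ((TuranHG 5 5 n).edges.card : ℝ) + 2000 * (n:ℝ)^(3:ℕ) := by
  have hP : (∏ c : Fin 5, (Finset.univ.filter (fun i : Fin n => (i:ℕ) % 5 = (c:ℕ))).card)
      = ((n+4)/5) * ((n+3)/5) * ((n+2)/5) * ((n+1)/5) * ((n+0)/5) := by
    rw [Fin.prod_univ_five]
    rw [show ((0 : Fin 5):ℕ) = 0 from rfl, show ((1 : Fin 5):ℕ) = 1 from rfl,
      show ((2 : Fin 5):ℕ) = 2 from rfl, show ((3 : Fin 5):ℕ) = 3 from rfl,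
      show ((4 : Fin 5):ℕ) = 4 from rfl]
    rw [fin_residue_card n 0 (by norm_num), fin_residue_card n 1 (by norm_num),
      fin_residue_card n 2 (by norm_num), fin_residue_card n 3 (by norm_num),
      fin_residue_card n 4 (by norm_num)]
    rw [show n+4-0 = n+4 from rfl, show n+4-1 = n+3 from by omega,
      show n+4-2 = n+2 from by omega, show n+4-3 = n+1 from by omega,
      show n+4-4 = n+0 from by omega]
  have hPle := turan_prod_le n
  rw [hP] at hPle
  obtain ⟨k, r, hr, rfl⟩ : ∃ k r, r < 5 ∧ n = 5*k + r :=
    ⟨n/5, n%5, Nat.mod_lt _ (by norm_num), by omega⟩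
  have hk : (0:ℝ) ≤ (k:ℝ) := Nat.cast_nonneg k
  have hT : (0:ℝ) ≤ ((TuranHG 5 5 (5*k+r)).edges.card : ℝ) := Nat.cast_nonneg _
  interval_cases r <;>
  · simp only [Nat.add_assoc] at hPle
    norm_num [show ∀ j, (5*k+j)/5 = k + j/5 from fun j => by omega] at hPle
    have hR := (Nat.cast_le (α := ℝ)).mpr hPle
    push_cast at hR ⊢
    nlinarith [hR, hk, hT, sq_nonneg (k:ℝ), mul_nonneg hk hk]


lemma keyLemma {α : ℝ} (hα : 1 < α) {n : ℕ} (hn : 0 < n) (G : RGraph 2 n)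
    (c : Fin n → Fin 5) (hc : ∀ e ∈ G.edges, e.image c ∈ C5.edges)
    (x : Fin n → ℝ) (hx : ∑ i, |x i| ^ α = 1) :
    lagPoly C5 G x ≤ 10 * ((n:ℝ) ^ ((5:ℝ) - 5/α) / 3125) := by
  classical
  set y : Fin n → ℝ := fun i => |x i| with hy
  have hy0 : ∀ i, 0 ≤ y i := fun i => abs_nonneg _
  set S : Finset (Fin 5 → Fin n) :=
    Finset.univ.filter (fun ρ => (fun j => c (ρ j)) ∈ Inj C5 C5) with hS
  set a : Fin 5 → ℝ := fun j => ∑ i ∈ Finset.univ.filter (fun i => c i = j), y i with haa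
  have ha0 : ∀ j, 0 ≤ a j := fun j => Finset.sum_nonneg fun i _ => hy0 i
  have step1 : lagPoly C5 G x ≤ ∑ φ ∈ Inj C5 G, ∏ j : Fin 5, y (φ j) := by
    unfold lagPoly
    apply Finset.sum_le_sum
    intro φ hφ
    have hinj := (mem_Inj.mp hφ).1
    calc ∏ i ∈ Finset.univ.image φ, x i
        ≤ |∏ i ∈ Finset.univ.image φ, x i| := le_abs_self _
      _ = ∏ i ∈ Finset.univ.image φ, |x i| := Finset.abs_prod _ _
      _ = ∏ j : Fin 5, y (φ j) := Finset.prod_image (fun u _ v _ h => hinj h)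
  have hsub : Inj C5 G ⊆ S := by
    intro φ hφ
    obtain ⟨hinj, hedge⟩ := mem_Inj.mp hφ
    refine Finset.mem_filter.mpr ⟨Finset.mem_univ _, ?_⟩
    apply hom_mem_InjC5C5
    intro e he
    have := hc _ (hedge e he); rw [Finset.image_image] at this; exact this
  have step2 : ∑ φ ∈ Inj C5 G, ∏ j : Fin 5, y (φ j)
      ≤ ∑ ρ ∈ S, ∏ j : Fin 5, y (ρ j) :=
    Finset.sum_le_sum_of_subset_of_nonneg hsub
      (fun ρ _ _ => Finset.prod_nonneg fun j _ => hy0 _)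
  have step3 : ∑ ρ ∈ S, ∏ j : Fin 5, y (ρ j)
      = ∑ σ ∈ Inj C5 C5, ∑ ρ ∈ S.filter (fun ρ => (fun j => c (ρ j)) = σ),
          ∏ j : Fin 5, y (ρ j) :=
    (Finset.sum_fiberwise_of_maps_to (fun ρ hρ => (Finset.mem_filter.mp hρ).2) _).symm
  have step4 : ∀ σ ∈ Inj C5 C5,
      (∑ ρ ∈ S.filter (fun ρ => (fun j => c (ρ j)) = σ), ∏ j : Fin 5, y (ρ j))
        = ∏ j : Fin 5, a j := by
    intro σ hσ
    have hfib : S.filter (fun ρ => (fun j => c (ρ j)) = σ)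
        = Fintype.piFinset (fun j => Finset.univ.filter (fun i => c i = σ j)) := by
      ext ρ
      simp only [hS, Finset.mem_filter, Finset.mem_univ, true_and,
        Fintype.mem_piFinset]
      constructor
      · rintro ⟨-, hfeq⟩ j
        exact congrFun hfeq j
      · intro h
        have hfeq : (fun j => c (ρ j)) = σ := funext h
        exact ⟨hfeq ▸ hσ, hfeq⟩
    rw [hfib, ← Finset.prod_univ_sum]
    have hbij : Function.Bijective σ :=
      Finite.injective_iff_bijective.mp (mem_Inj.mp hσ).1
    exact hbij.prod_comp a
  have step5 : ∑ σ ∈ Inj C5 C5, ∑ ρ ∈ S.filter (fun ρ => (fun j => c (ρ j)) = σ),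
        ∏ j : Fin 5, y (ρ j) = (Inj C5 C5).card * ∏ j : Fin 5, a j := by
    rw [Finset.sum_congr rfl step4, Finset.sum_const, nsmul_eq_mul]
  have step6 : ((Inj C5 C5).card : ℝ) * ∏ j : Fin 5, a j ≤ 10 * ∏ j : Fin 5, a j := by
    apply mul_le_mul_of_nonneg_right _ (Finset.prod_nonneg fun j _ => ha0 j)
    exact_mod_cast InjC5C5_card_le
  have step7 : ∏ j : Fin 5, a j ≤ (n:ℝ) ^ ((5:ℝ) - 5/α) / 3125 :=
    prod_classes_le hα hn c y hy0 hx
  calc lagPoly C5 G x ≤ ∑ φ ∈ Inj C5 G, ∏ j : Fin 5, y (φ j) := step1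
    _ ≤ ∑ ρ ∈ S, ∏ j : Fin 5, y (ρ j) := step2
    _ = ((Inj C5 C5).card : ℝ) * ∏ j : Fin 5, a j := by rw [step3, step5]
    _ ≤ 10 * ∏ j : Fin 5, a j := step6
    _ ≤ 10 * ((n:ℝ) ^ ((5:ℝ) - 5/α) / 3125) :=
        mul_le_mul_of_nonneg_left step7 (by norm_num)


/-- **Claim (spectral bound for `C₅`-colorable graphs).** -/
theorem C5_colorable_spectral_bound {α : ℝ} (hα : 1 < α) :
    ∀ δ : ℝ, 0 < δ → ∃ N0 : ℕ, ∀ n : ℕ, N0 ≤ n → ∀ G : RGraph 2 n, C5Colorable G →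
      specRad α C5 G ≤
        10 * ((TuranHG 5 5 n).edges.card : ℝ) / (n : ℝ) ^ ((5 : ℝ) / α)
          + δ * (n : ℝ) ^ ((4 : ℝ) - 5 / α) := by
  intro δ hδ
  refine ⟨max 1 ⌈(7:ℝ)/δ⌉₊, fun n hn G hG => ?_⟩
  have hn1 : 1 ≤ n := le_trans (le_max_left _ _) hn
  have hnpos : 0 < n := hn1
  have hNR : (0:ℝ) < (n:ℝ) := by exact_mod_cast hnpos
  have hceil : ((7:ℝ)/δ) ≤ (n:ℝ) := by
    have h1 : ((⌈(7:ℝ)/δ⌉₊ : ℕ) : ℝ) ≤ (n:ℝ) :=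
      Nat.cast_le.mpr (le_trans (le_max_right _ _) hn)
    exact le_trans (Nat.le_ceil _) h1
  have h7 : 7 ≤ δ * n := by
    rw [div_le_iff₀ hδ] at hceil
    linarith
  obtain ⟨c, hc⟩ := hG
  have hT0 : (0:ℝ) ≤ ((TuranHG 5 5 n).edges.card : ℝ) := Nat.cast_nonneg _
  have hRHS0 : 0 ≤ 10 * ((TuranHG 5 5 n).edges.card : ℝ) / (n : ℝ) ^ ((5 : ℝ) / α)
      + δ * (n : ℝ) ^ ((4 : ℝ) - 5 / α) := by positivity
  apply Real.sSup_le _ hRHS0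
  rintro z ⟨x, hx, rfl⟩
  have hx' : ∑ i, |x i| ^ α = 1 := hx
  refine le_trans (keyLemma hα hnpos G c hc x hx') ?_
  have hsplit5 : (n:ℝ) ^ ((5:ℝ) - 5/α) = (n:ℝ)^(5:ℕ) * (n:ℝ) ^ (-(5/α)) := by
    rw [← Real.rpow_natCast (n:ℝ) 5, ← Real.rpow_add hNR]
    norm_num
    rw [sub_eq_add_neg]
  have hsplit4 : (n:ℝ) ^ ((4:ℝ) - 5/α) = (n:ℝ)^(4:ℕ) * (n:ℝ) ^ (-(5/α)) := by
    rw [← Real.rpow_natCast (n:ℝ) 4, ← Real.rpow_add hNR]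
    norm_num
    rw [sub_eq_add_neg]
  have hdiv : 10 * ((TuranHG 5 5 n).edges.card : ℝ) / (n:ℝ) ^ ((5:ℝ)/α)
      = 10 * ((TuranHG 5 5 n).edges.card : ℝ) * (n:ℝ) ^ (-(5/α)) := by
    rw [Real.rpow_neg hNR.le, div_eq_mul_inv]
  have htur := turan_lower n
  have hpos : (0:ℝ) < (n:ℝ) ^ (-(5/α)) := Real.rpow_pos_of_pos hNR _
  have hkey : 10 * ((n:ℝ)^(5:ℕ)) / 3125 ≤ 10 * ((TuranHG 5 5 n).edges.card : ℝ)
      + δ * (n:ℝ)^(4:ℕ) := by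
    have h4 : (n:ℝ)^(4:ℕ) = (n:ℝ) * (n:ℝ)^(3:ℕ) := by ring
    nlinarith [htur, h7, hT0, pow_nonneg hNR.le 3, hNR]
  have hmul := mul_le_mul_of_nonneg_right hkey hpos.le
  calc 10 * ((n:ℝ) ^ ((5:ℝ) - 5/α) / 3125)
      = (10 * ((n:ℝ)^(5:ℕ)) / 3125) * ((n:ℝ) ^ (-(5/α))) := by rw [hsplit5]; ring
    _ ≤ (10 * ((TuranHG 5 5 n).edges.card : ℝ) + δ * (n:ℝ)^(4:ℕ)) * ((n:ℝ) ^ (-(5/α))) := hmul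
    _ = 10 * ((TuranHG 5 5 n).edges.card : ℝ) / (n : ℝ) ^ ((5 : ℝ) / α)
          + δ * (n : ℝ) ^ ((4 : ℝ) - 5 / α) := by rw [hdiv, hsplit4]; ring
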